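/- arXiv:2505.04328 — 2 statements merged into one kernel-verified Lean document; each statement's English description precedes it below -/
import Mathlib

section
/- Let d, L, K ∈ ℕ, Δt > 0, z⁰ ∈ ℝ^d. Let a : ℝ^d × ℝ^L → ℝ^d and g : ℝ^d × ℝ^L → ℝ be continuously differentiable, and for each κ ∈ {0, …, K−1} let β^κ : ℝ^d → ℝ^d be continuously differentiable. For μ = (μ⁰, …, μ^{K−1}) ∈ (ℝ^L)^K define the states z^κ(μ) by the explicit Euler recursion z⁰(μ) = z⁰ and z^{κ+1}(μ) = z^κ(μ) + Δt·a(z^κ(μ), μ^κ) + β^κ(z^κ(μ)), and define the discrete cost J(μ) = Δt·Σ_{κ=0}^{K−1} g(z^κ(μ), μ^κ). Define the adjoint states backward by r^K = 0 and, for κ = K−1, …, 0, r^κ = r^{κ+1} + Δt·(D_z a(z^κ, μ^κ))^⊤ r^{κ+1} + (D β^κ(z^κ))^⊤ r^{κ+1} − Δt·∇_z g(z^κ, μ^κ), where D_z a denotes the Jacobian of a in its first argument, D β^κ the Jacobian of β^κ, ^⊤ the transpose, and ∇_z g the gradient of g in its first argument. Then J is differentiable and, for every κ ∈ {0, …, K−1},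 the partial gradient of J with respect to μ^κ is ∇_{μ^κ} J(μ) = Δt·∇_μ g(z^κ, μ^κ) − Δt·(D_μ a(z^κ, μ^κ))^⊤ r^{κ+1}, where D_μ a is the Jacobian of a in its second argument and ∇_μ g the gradient of g in its second argument. -/
open scoped BigOperators

open ContinuousLinearMap in
private lemma partial_fst_hasFDerivAt {E F G : Type*} [NormedAddCommGroup E] [NormedSpace ℝ E]
    [NormedAddCommGroup F] [NormedSpace ℝ F] [NormedAddCommGroup G] [NormedSpace ℝ G]
    {f : E × F → G} (hf : Differentiable ℝ f) (x : E) (y : F) :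
    HasFDerivAt (fun w => f (w, y)) ((fderiv ℝ f (x, y)).comp (inl ℝ E F)) x :=
  (hf (x, y)).hasFDerivAt.comp x (hasFDerivAt_prodMk_left x y)

open ContinuousLinearMap in
private lemma partial_snd_hasFDerivAt {E F G : Type*} [NormedAddCommGroup E] [NormedSpace ℝ E]
    [NormedAddCommGroup F] [NormedSpace ℝ F] [NormedAddCommGroup G] [NormedSpace ℝ G]
    {f : E × F → G} (hf : Differentiable ℝ f) (x : E) (y : F) :
    HasFDerivAt (fun m => f (x, m)) ((fderiv ℝ f (x, y)).comp (inr ℝ E F)) y :=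
  (hf (x, y)).hasFDerivAt.comp y (hasFDerivAt_prodMk_right x y)

private lemma inner_gradient_eq {F : Type*} [NormedAddCommGroup F] [InnerProductSpace ℝ F]
    [CompleteSpace F] (f : F → ℝ) (x y : F) :
    (inner ℝ (gradient f x) y : ℝ) = fderiv ℝ f x y := by
  rw [gradient]
  exact InnerProductSpace.toDual_symm_apply

set_option maxHeartbeats 2000000 in
/-- discretize-then-optimize adjoint gradient formula for the
explicit Euler scheme. The states `z^κ(μ)` follow the Euler recursion
`z^{κ+1} = z^κ + Δt·a(z^κ, μ^κ) + β^κ(z^κ)` from `z⁰`, the discrete cost is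
`J(μ) = Δt·Σ_κ g(z^κ, μ^κ)`, and the adjoint states satisfy `r^K = 0` and
`r^κ = r^{κ+1} + Δt·(D_z a)^⊤ r^{κ+1} + (Dβ^κ)^⊤ r^{κ+1} − Δt·∇_z g`. Then `J`
is differentiable and
`∇_{μ^κ} J(μ) = Δt·∇_μ g(z^κ, μ^κ) − Δt·(D_μ a(z^κ, μ^κ))^⊤ r^{κ+1}`. -/
theorem euler_adjoint_gradient {d L K : ℕ} (Δt : ℝ) (hΔt : 0 < Δt)
    (z0 : EuclideanSpace ℝ (Fin d))
    (a : EuclideanSpace ℝ (Fin d) × EuclideanSpace ℝ (Fin L) → EuclideanSpace ℝ (Fin d))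
    (g : EuclideanSpace ℝ (Fin d) × EuclideanSpace ℝ (Fin L) → ℝ)
    (β : ℕ → EuclideanSpace ℝ (Fin d) → EuclideanSpace ℝ (Fin d))
    (ha : ContDiff ℝ 1 a) (hg : ContDiff ℝ 1 g) (hβ : ∀ κ, ContDiff ℝ 1 (β κ))
    -- the states, as functions of the control sequence
    (z : (Fin K → EuclideanSpace ℝ (Fin L)) → ℕ → EuclideanSpace ℝ (Fin d))
    (hz0 : ∀ μ, z μ 0 = z0)
    (hzrec : ∀ μ, ∀ κ : Fin K,
      z μ ((κ : ℕ) + 1) = z μ κ + Δt • a (z μ κ, μ κ) + β κ (z μ κ))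
    -- the discrete cost
    (J : (Fin K → EuclideanSpace ℝ (Fin L)) → ℝ)
    (hJ : J = fun μ => Δt * ∑ κ : Fin K, g (z μ κ, μ κ))
    -- a fixed control and its adjoint states
    (μ : Fin K → EuclideanSpace ℝ (Fin L))
    (r : ℕ → EuclideanSpace ℝ (Fin d))
    (hrK : r K = 0)
    (hrrec : ∀ κ : Fin K,
      r κ = r ((κ : ℕ) + 1)
        + Δt • (fderiv ℝ (fun w => a (w, μ κ)) (z μ κ)).adjoint (r ((κ : ℕ) + 1))
        + (fderiv ℝ (β κ) (z μ κ)).adjoint (r ((κ : ℕ) + 1))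
        - Δt • gradient (fun w => g (w, μ κ)) (z μ κ)) :
    Differentiable ℝ J ∧
    ∀ κ : Fin K,
      gradient (fun m => J (Function.update μ κ m)) (μ κ)
        = Δt • gradient (fun m => g (z μ κ, m)) (μ κ)
          - Δt • (fderiv ℝ (fun m => a (z μ κ, m)) (μ κ)).adjoint (r ((κ : ℕ) + 1)) := by
  classical
  have had : Differentiable ℝ a := ha.differentiable one_ne_zero
  have hgd : Differentiable ℝ g := hg.differentiable one_ne_zero
  have hβd : ∀ k, Differentiable ℝ (β k) := fun k => (hβ k).differentiable one_ne_zero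
  have hzeq : ∀ (j : ℕ) (hjK : j < K), (fun μ' : Fin K → EuclideanSpace ℝ (Fin L) => z μ' (j + 1))
      = fun μ' => z μ' j + Δt • a (z μ' j, μ' ⟨j, hjK⟩) + β j (z μ' j) :=
    fun j hjK => funext fun μ' => hzrec μ' ⟨j, hjK⟩
  -- differentiability of the states
  have hzdiff : ∀ j : ℕ, j ≤ K → Differentiable ℝ (fun μ' => z μ' j) := by
    intro j
    induction j with
    | zero =>
      intro _
      have : (fun μ' : Fin K → EuclideanSpace ℝ (Fin L) => z μ' 0) = fun _ => z0 :=
        funext fun μ' => hz0 μ'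
      rw [this]; exact differentiable_const z0
    | succ j ih =>
      intro hj
      have hjK : j < K := hj
      have ihd := ih hjK.le
      rw [hzeq j hjK]
      have h2 : Differentiable ℝ (fun μ' : Fin K → EuclideanSpace ℝ (Fin L) => μ' ⟨j, hjK⟩) :=
        differentiable_apply (𝕜 := ℝ) (⟨j, hjK⟩ : Fin K)
      exact (ihd.add ((had.comp (ihd.prodMk h2)).const_smul Δt)).add ((hβd j).comp ihd)
  -- differentiability of the cost
  have hterm : ∀ i : Fin K,
      Differentiable ℝ (fun μ' : Fin K → EuclideanSpace ℝ (Fin L) => g (z μ' i, μ' i)) := by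
    intro i
    exact hgd.comp ((hzdiff i i.2.le).prodMk (differentiable_apply (𝕜 := ℝ) i))
  have hJd : Differentiable ℝ J := by
    rw [hJ]
    exact ((Differentiable.fun_sum (fun i _ => hterm i)).const_mul Δt)
  refine ⟨hJd, ?_⟩
  intro κ
  apply ext_inner_right ℝ
  intro v
  -- the perturbation direction
  set e : Fin K → EuclideanSpace ℝ (Fin L) := Pi.single κ v with he
  -- the state sensitivities in direction e
  set w : ℕ → EuclideanSpace ℝ (Fin d) :=
    fun j => fderiv ℝ (fun μ' => z μ' j) μ e with hw
  have hzfd : ∀ j : ℕ, j ≤ K →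
      HasFDerivAt (fun μ' => z μ' j) (fderiv ℝ (fun μ' => z μ' j) μ) μ :=
    fun j hj => (hzdiff j hj μ).hasFDerivAt
  -- recursion for the sensitivities
  have hwrec : ∀ (j : ℕ) (hjK : j < K),
      w (j + 1) = w j + Δt • (fderiv ℝ a (z μ j, μ ⟨j, hjK⟩)) (w j, e ⟨j, hjK⟩)
        + (fderiv ℝ (β j) (z μ j)) (w j) := by
    intro j hjK
    have hzj := hzfd j hjK.le
    have hproj : HasFDerivAt (fun μ' : Fin K → EuclideanSpace ℝ (Fin L) => μ' ⟨j, hjK⟩)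
        (ContinuousLinearMap.proj (R := ℝ) (⟨j, hjK⟩ : Fin K)) μ :=
      hasFDerivAt_apply (𝕜 := ℝ) (⟨j, hjK⟩ : Fin K) μ
    have hDa := ((had (z μ j, μ ⟨j, hjK⟩)).hasFDerivAt).comp μ (hzj.prodMk hproj)
    have hβj := ((hβd j (z μ j)).hasFDerivAt).comp μ hzj
    have hstep : HasFDerivAt (fun μ' => z μ' (j + 1))
        ((fderiv ℝ (fun μ' => z μ' j) μ
          + Δt • ((fderiv ℝ a (z μ j, μ ⟨j, hjK⟩)).comp
              ((fderiv ℝ (fun μ' => z μ' j) μ).prod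
                (ContinuousLinearMap.proj (R := ℝ) (⟨j, hjK⟩ : Fin K)))))
          + ((fderiv ℝ (β j) (z μ j)).comp (fderiv ℝ (fun μ' => z μ' j) μ))) μ := by
      rw [hzeq j hjK]
      exact (hzj.add (hDa.const_smul Δt)).add hβj
    show (fderiv ℝ (fun μ' => z μ' (j + 1)) μ) e = w j
        + Δt • (fderiv ℝ a (z μ j, μ ⟨j, hjK⟩)) (w j, e ⟨j, hjK⟩)
        + (fderiv ℝ (β j) (z μ j)) (w j)
    rw [hstep.fderiv]
    simp [ContinuousLinearMap.add_apply, ContinuousLinearMap.smul_apply,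
      ContinuousLinearMap.comp_apply, ContinuousLinearMap.prod_apply,
      ContinuousLinearMap.proj_apply]
    rfl
  -- sensitivities vanish up to time κ
  have hw0 : ∀ j : ℕ, j ≤ (κ : ℕ) → w j = 0 := by
    intro j
    induction j with
    | zero =>
      intro _
      have : (fun μ' : Fin K → EuclideanSpace ℝ (Fin L) => z μ' 0) = fun _ => z0 :=
        funext fun μ' => hz0 μ'
      show (fderiv ℝ (fun μ' => z μ' 0) μ) e = 0
      rw [this, fderiv_const_apply]
      simp
    | succ j ih =>
      intro hj
      have hjκ : j < (κ : ℕ) := hj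
      have hjK : j < K := hjκ.trans κ.2
      have hwj : w j = 0 := ih hjκ.le
      have hne : (⟨j, hjK⟩ : Fin K) ≠ κ := Fin.ne_of_val_ne (show j ≠ (κ:ℕ) from Nat.ne_of_lt hjκ)
      have he0 : e ⟨j, hjK⟩ = 0 := by rw [he]; exact Pi.single_eq_of_ne (M := fun _ => EuclideanSpace ℝ (Fin L)) hne v
      rw [hwrec j hjK, hwj, he0]
      simp [Prod.mk_zero_zero]
  -- value of the sensitivity at time κ+1
  have hwκ1 : w ((κ : ℕ) + 1) = Δt • (fderiv ℝ (fun m => a (z μ κ, m)) (μ κ)) v := by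
    have hκK : (κ : ℕ) < K := κ.2
    have hB := (partial_snd_hasFDerivAt had (z μ κ) (μ κ)).fderiv
    have hcast : (⟨(κ : ℕ), hκK⟩ : Fin K) = κ := Fin.eta κ hκK
    rw [hwrec κ hκK, hcast, hw0 κ le_rfl]
    have heκ : e κ = v := by rw [he]; exact Pi.single_eq_same (M := fun _ => EuclideanSpace ℝ (Fin L)) κ v
    rw [heκ, hB]
    simp [← Prod.mk_zero_zero, ContinuousLinearMap.comp_apply, ContinuousLinearMap.inr_apply]
  -- summand for the z-part of the gradient
  set G : ℕ → ℝ := fun i =>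
    if h : i < K then (fderiv ℝ g (z μ i, μ ⟨i, h⟩)) (w i, 0) else 0 with hG
  -- backward induction: adjoint identity
  have key : ∀ n : ℕ, ∀ j : ℕ, j + n = K → (κ : ℕ) + 1 ≤ j →
      (inner ℝ (r j) (w j) : ℝ) = -∑ i ∈ Finset.Ico j K, Δt * G i := by
    intro n
    induction n with
    | zero =>
      intro j hjn _
      have : j = K := by omega
      subst this
      simp [hrK]
    | succ n ih =>
      intro j hjn hκj
      have hjK : j < K := by omega
      have hr : r j = r (j + 1)
          + Δt • (fderiv ℝ (fun x => a (x, μ ⟨j, hjK⟩)) (z μ j)).adjoint (r (j + 1))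
          + (fderiv ℝ (β j) (z μ j)).adjoint (r (j + 1))
          - Δt • gradient (fun x => g (x, μ ⟨j, hjK⟩)) (z μ j) := hrrec ⟨j, hjK⟩
      have hne : (⟨j, hjK⟩ : Fin K) ≠ κ := Fin.ne_of_val_ne (show j ≠ (κ:ℕ) by omega)
      have he0 : e ⟨j, hjK⟩ = 0 := by rw [he]; exact Pi.single_eq_of_ne (M := fun _ => EuclideanSpace ℝ (Fin L)) hne v
      have hA := (partial_fst_hasFDerivAt had (z μ j) (μ ⟨j, hjK⟩)).fderiv
      have hAw : (fderiv ℝ (fun x => a (x, μ ⟨j, hjK⟩)) (z μ j)) (w j)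
          = (fderiv ℝ a (z μ j, μ ⟨j, hjK⟩)) (w j, 0) := by
        rw [hA]; rfl
      have hwj1 : w (j + 1) = w j + Δt • (fderiv ℝ a (z μ j, μ ⟨j, hjK⟩)) (w j, 0)
          + (fderiv ℝ (β j) (z μ j)) (w j) := by
        rw [hwrec j hjK, he0]
      have hGj : G j = (fderiv ℝ g (z μ j, μ ⟨j, hjK⟩)) (w j, 0) := by
        rw [hG]; simp [hjK]
      have hgz : (inner ℝ (gradient (fun x => g (x, μ ⟨j, hjK⟩)) (z μ j)) (w j) : ℝ) = G j := by
        rw [inner_gradient_eq, (partial_fst_hasFDerivAt hgd (z μ j) (μ ⟨j, hjK⟩)).fderiv, hGj]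
        rfl
      have ihj := ih (j + 1) (by omega) (by omega)
      have hsplit : ∑ i ∈ Finset.Ico j K, Δt * G i
          = Δt * G j + ∑ i ∈ Finset.Ico (j + 1) K, Δt * G i :=
        Finset.sum_eq_sum_Ico_succ_bot hjK _
      have expand : (inner ℝ (r j) (w j) : ℝ)
          = inner ℝ (r (j + 1)) (w (j + 1)) - Δt * G j := by
        rw [hr, hwj1]
        rw [inner_sub_left, inner_add_left, inner_add_left]
        rw [real_inner_smul_left, real_inner_smul_left]
        rw [ContinuousLinearMap.adjoint_inner_left, ContinuousLinearMap.adjoint_inner_left]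
        rw [hAw, hgz]
        rw [inner_add_right, inner_add_right, real_inner_smul_right]
        try ring
      rw [expand, ihj, hsplit]
      ring
  -- derivative of the update map
  set T : EuclideanSpace ℝ (Fin L) →L[ℝ] (Fin K → EuclideanSpace ℝ (Fin L)) :=
    ContinuousLinearMap.pi
      (fun i => if i = κ then ContinuousLinearMap.id ℝ (EuclideanSpace ℝ (Fin L)) else 0) with hT
  have hTapp : ∀ x, T x = Pi.single κ x := by
    intro x
    funext i
    rw [hT]
    by_cases h : i = κ
    · subst h; simp
    · simp [h, Pi.single_eq_of_ne h]
  have hupd : HasFDerivAt (fun m => Function.update μ κ m) T (μ κ) := by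
    have hfun : (fun m => Function.update μ κ m) = fun m => (μ - T (μ κ)) + T m := by
      funext m
      funext i
      by_cases h : i = κ
      · subst h
        simp [hTapp, Function.update_self, Pi.single_eq_same]
      · simp [hTapp, Function.update_of_ne h, Pi.single_eq_of_ne h]
    rw [hfun]
    exact (T.hasFDerivAt (x := μ κ)).const_add (μ - T (μ κ))
  -- the fderiv of the reduced cost in direction v
  have hcompat : Function.update μ κ (μ κ) = μ := Function.update_eq_self κ μ
  have hJat : HasFDerivAt J (fderiv ℝ J μ) (Function.update μ κ (μ κ)) := by
    rw [hcompat]; exact (hJd μ).hasFDerivAt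
  have hcomp : HasFDerivAt (fun m => J (Function.update μ κ m))
      ((fderiv ℝ J μ).comp T) (μ κ) := hJat.comp (μ κ) hupd
  have hLHS : (inner ℝ (gradient (fun m => J (Function.update μ κ m)) (μ κ)) v : ℝ)
      = fderiv ℝ J μ e := by
    rw [inner_gradient_eq, hcomp.fderiv]
    rw [ContinuousLinearMap.comp_apply, hTapp, ← he]
  -- compute fderiv J μ e
  have hΦ : ∀ i : Fin K, HasFDerivAt (fun μ' : Fin K → EuclideanSpace ℝ (Fin L) => g (z μ' i, μ' i))
      ((fderiv ℝ g (z μ i, μ i)).comp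
        ((fderiv ℝ (fun μ' => z μ' i) μ).prod (ContinuousLinearMap.proj (R := ℝ) i))) μ := by
    intro i
    exact ((hgd (z μ i, μ i)).hasFDerivAt).comp μ
      ((hzfd i i.2.le).prodMk (hasFDerivAt_apply (𝕜 := ℝ) i μ))
  have hJfd : HasFDerivAt J (Δt • ∑ i : Fin K,
      ((fderiv ℝ g (z μ i, μ i)).comp
        ((fderiv ℝ (fun μ' => z μ' i) μ).prod (ContinuousLinearMap.proj (R := ℝ) i)))) μ := by
    rw [hJ]
    exact (HasFDerivAt.fun_sum (fun i _ => hΦ i)).const_mul Δt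
  have hJe : fderiv ℝ J μ e = Δt * ∑ i : Fin K, (fderiv ℝ g (z μ i, μ i)) (w i, e i) := by
    rw [hJfd.fderiv]
    simp only [ContinuousLinearMap.smul_apply, ContinuousLinearMap.sum_apply,
      ContinuousLinearMap.comp_apply, ContinuousLinearMap.prod_apply,
      ContinuousLinearMap.proj_apply, smul_eq_mul]
    try rfl
  -- split each summand
  have hsummand : ∀ i : Fin K, (fderiv ℝ g (z μ i, μ i)) (w i, e i)
      = G i + (fderiv ℝ g (z μ i, μ i)) (0, e i) := by
    intro i
    have : ((w i, e i) : _ × _) = (w i, 0) + (0, e i) := by simp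
    rw [this, map_add]
    have hGi : G (i : ℕ) = (fderiv ℝ g (z μ i, μ i)) (w i, 0) := by
      rw [hG]; simp [i.2, Fin.eta]
    rw [hGi]
  have hsum2 : ∑ i : Fin K, (fderiv ℝ g (z μ i, μ i)) (0, e i)
      = (fderiv ℝ g (z μ κ, μ κ)) (0, v) := by
    rw [Finset.sum_eq_single κ]
    · rw [he, Pi.single_eq_same]
    · intro i _ hiκ
      have : e i = 0 := by rw [he]; exact Pi.single_eq_of_ne (M := fun _ => EuclideanSpace ℝ (Fin L)) hiκ v
      rw [this]
      simp [Prod.mk_zero_zero]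
    · intro h; exact absurd (Finset.mem_univ κ) h
  have hsumG : ∑ i : Fin K, G (i : ℕ) = ∑ i ∈ Finset.Ico ((κ : ℕ) + 1) K, G i := by
    rw [Fin.sum_univ_eq_sum_range]
    rw [← Finset.sum_range_add_sum_Ico _ (by omega : (κ : ℕ) + 1 ≤ K)]
    have hzero : ∑ i ∈ Finset.range ((κ : ℕ) + 1), G i = 0 := by
      apply Finset.sum_eq_zero
      intro i hi
      have hiκ : i ≤ (κ : ℕ) := by
        simpa [Nat.lt_succ_iff] using Finset.mem_range.mp hi
      rw [hG]
      by_cases h : i < K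
      · simp only [h, dif_pos]
        rw [hw0 i hiκ]
        simp [Prod.mk_zero_zero]
      · simp [h]
    rw [hzero, zero_add]
  -- the gradient identities at time κ
  have hgm : (inner ℝ (gradient (fun m => g (z μ κ, m)) (μ κ)) v : ℝ)
      = (fderiv ℝ g (z μ κ, μ κ)) (0, v) := by
    rw [inner_gradient_eq, (partial_snd_hasFDerivAt hgd (z μ κ) (μ κ)).fderiv]
    rfl
  -- the key adjoint identity at κ+1
  have hkey := key (K - ((κ : ℕ) + 1)) ((κ : ℕ) + 1) (by omega) le_rfl
  -- right-hand side
  have hRHS : (inner ℝ (Δt • gradient (fun m => g (z μ κ, m)) (μ κ)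
      - Δt • (fderiv ℝ (fun m => a (z μ κ, m)) (μ κ)).adjoint (r ((κ : ℕ) + 1))) v : ℝ)
      = Δt * (fderiv ℝ g (z μ κ, μ κ)) (0, v)
        - inner ℝ (r ((κ : ℕ) + 1)) (w ((κ : ℕ) + 1)) := by
    rw [inner_sub_left, real_inner_smul_left, real_inner_smul_left,
      ContinuousLinearMap.adjoint_inner_left, hgm, hwκ1, real_inner_smul_right,
      real_inner_comm]
    try ring
  rw [hLHS, hRHS, hJe]
  have : ∑ i : Fin K, (fderiv ℝ g (z μ i, μ i)) (w i, e i)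
      = (∑ i ∈ Finset.Ico ((κ : ℕ) + 1) K, G i) + (fderiv ℝ g (z μ κ, μ κ)) (0, v) := by
    calc ∑ i : Fin K, (fderiv ℝ g (z μ i, μ i)) (w i, e i)
        = ∑ i : Fin K, (G (i : ℕ) + (fderiv ℝ g (z μ i, μ i)) (0, e i)) := by
          exact Finset.sum_congr rfl (fun i _ => hsummand i)
      _ = (∑ i : Fin K, G (i : ℕ)) + ∑ i : Fin K, (fderiv ℝ g (z μ i, μ i)) (0, e i) :=
          Finset.sum_add_distrib
      _ = _ := by rw [hsumG, hsum2]
  rw [← Finset.mul_sum] at hkey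
  rw [this, hkey]
  ring
end

section
/- Let L, K, N ∈ ℕ, Δt > 0, α > 0, η ∈ ℝ. Let φ : ℝ² → ℝ^L and 𝒥 : ℝ² → ℝ be continuously differentiable, and define a : ℝ² × ℝ^L → ℝ² by a((x,v), μ) = (v, ⟨μ, φ(x,v)⟩ − η x) and g : ℝ² × ℝ^L → ℝ by g(z, μ) = 𝒥(z) + (α/2)·⟨μ, φ(z)⟩². For each particle j ∈ {1, …, N} let z_j⁰ ∈ ℝ² and let β_j^κ : ℝ² → ℝ² (κ = 0, …, K−1) be continuously differentiable, and for μ = (μ⁰, …, μ^{K−1}) ∈ (ℝ^L)^K define the states z_j^κ(μ) by z_j⁰(μ) = z_j⁰ and z_j^{κ+1}(μ) = z_j^κ(μ) + Δt·a(z_j^κ(μ), μ^κ) + β_j^κ(z_j^κ(μ)), and the adjoint states r_j^κ = (q_j^κ, p_j^κ) ∈ ℝ² by r_j^K = 0 and r_j^κ = r_j^{κ+1} + Δt·(D_z a(z_j^κ, μ^κ))^⊤ r_j^{κ+1} + (D β_j^κ(z_j^κ))^⊤ r_j^{κ+1} − Δt·∇_z g(z_j^κ, μ^κ). Define the discrete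 reduced objective Ĵ(μ) = (Δt/N)·Σ_{j=1}^N Σ_{κ=0}^{K−1} g(z_j^κ(μ), μ^κ). Then for every κ ∈ {0, …, K−1}, ∇_{μ^κ} Ĵ(μ) = (Δt/N)·Σ_{j=1}^N [ α·⟨φ(z_j^κ), μ^κ⟩·φ(z_j^κ) − p_j^{κ+1}·φ(z_j^κ) ]. -/
open scoped BigOperators RealInnerProductSpace

private noncomputable def pe1 : EuclideanSpace ℝ (Fin 2) := EuclideanSpace.single 1 1

private lemma prg_pair_contDiff {F : Type*} [NormedAddCommGroup F] [NormedSpace ℝ F]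
    {f g : F → ℝ} (hf : ContDiff ℝ 1 f) (hg : ContDiff ℝ 1 g) :
    ContDiff ℝ 1 (fun w => (WithLp.equiv 2 (Fin 2 → ℝ)).symm ![f w, g w]
      : F → EuclideanSpace ℝ (Fin 2)) := by
  have h : ContDiff ℝ 1 (fun w => ![f w, g w] : F → (Fin 2 → ℝ)) := by
    apply contDiff_pi.2
    intro i
    fin_cases i <;> simpa
  exact (EuclideanSpace.equiv (Fin 2) ℝ).symm.contDiff.comp h

private lemma prg_actrl {L : ℕ} (y : EuclideanSpace ℝ (Fin L)) (c1 c2 : ℝ)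
    (m0 : EuclideanSpace ℝ (Fin L)) :
    HasFDerivAt (fun m : EuclideanSpace ℝ (Fin L) =>
        ((WithLp.equiv 2 (Fin 2 → ℝ)).symm ![c1, ⟪m, y⟫ - c2] : EuclideanSpace ℝ (Fin 2)))
      ((innerSL ℝ y).smulRight pe1) m0 := by
  have heq : (fun m : EuclideanSpace ℝ (Fin L) =>
      ((WithLp.equiv 2 (Fin 2 → ℝ)).symm ![c1, ⟪m, y⟫ - c2] : EuclideanSpace ℝ (Fin 2)))
      = fun m => ((innerSL ℝ y).smulRight pe1) m
          + ((WithLp.equiv 2 (Fin 2 → ℝ)).symm ![c1, -c2] : EuclideanSpace ℝ (Fin 2)) := by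
    funext m
    apply PiLp.ext
    intro i
    fin_cases i <;>
      simp [pe1, ContinuousLinearMap.smulRight_apply, EuclideanSpace.single_apply,
        real_inner_comm, mul_comm] <;> ring_nf
  rw [heq]
  exact (((innerSL ℝ y).smulRight pe1).hasFDerivAt).add_const _

private lemma prg_inner_pe1 (rr : EuclideanSpace ℝ (Fin 2)) (t : ℝ) :
    ⟪rr, t • pe1⟫ = t * rr 1 := by
  simp [pe1, real_inner_smul_right, EuclideanSpace.inner_single_right, mul_comm]

private lemma prg_inner_pe1' (rr : EuclideanSpace ℝ (Fin 2)) :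
    ⟪rr, pe1⟫ = rr 1 := by
  simpa using prg_inner_pe1 rr 1

set_option maxHeartbeats 2000000 in
/-- reduced gradient of the discrete objective for the
particle system. Phase-space states `z = (x,v) ∈ ℝ²`, drift
`a((x,v),μ) = (v, ⟨μ, φ(x,v)⟩ − ηx)`, running cost
`g(z,μ) = 𝒥(z) + (α/2)⟨μ, φ(z)⟩²`; each particle `j` follows the Euler
recursion with noise maps `β_j^κ`, and its adjoint states
`r_j^κ = (q_j^κ, p_j^κ)` follow the backward adjoint recursion. With
`Jhat(μ) = (Δt/N)·Σ_j Σ_κ g(z_j^κ(μ), μ^κ)`, the reduced gradient is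
`∇_{μ^κ} Jhat(μ) = (Δt/N)·Σ_j [α⟨φ(z_j^κ), μ^κ⟩·φ(z_j^κ) − p_j^{κ+1}·φ(z_j^κ)]`. -/
theorem particle_reduced_gradient {L K N : ℕ} (Δt α η : ℝ) (hΔt : 0 < Δt)
    (hα : 0 < α) (hN : 0 < N)
    (φ : EuclideanSpace ℝ (Fin 2) → EuclideanSpace ℝ (Fin L))
    (𝒥 : EuclideanSpace ℝ (Fin 2) → ℝ)
    (hφ : ContDiff ℝ 1 φ) (h𝒥 : ContDiff ℝ 1 𝒥)
    -- the drift and the running cost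
    (a : EuclideanSpace ℝ (Fin 2) → EuclideanSpace ℝ (Fin L) → EuclideanSpace ℝ (Fin 2))
    (ha : a = fun w m =>
      (WithLp.equiv 2 (Fin 2 → ℝ)).symm ![w 1, ⟪m, φ w⟫ - η * w 0])
    (g : EuclideanSpace ℝ (Fin 2) → EuclideanSpace ℝ (Fin L) → ℝ)
    (hg : g = fun w m => 𝒥 w + α / 2 * ⟪m, φ w⟫ ^ 2)
    -- initial states and noise maps of the particles
    (z0 : Fin N → EuclideanSpace ℝ (Fin 2))
    (β : Fin N → ℕ → EuclideanSpace ℝ (Fin 2) → EuclideanSpace ℝ (Fin 2))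
    (hβ : ∀ j κ, ContDiff ℝ 1 (β j κ))
    -- the states, as functions of the control sequence
    (z : (Fin K → EuclideanSpace ℝ (Fin L)) → Fin N → ℕ → EuclideanSpace ℝ (Fin 2))
    (hz0 : ∀ μ j, z μ j 0 = z0 j)
    (hzrec : ∀ μ j, ∀ κ : Fin K,
      z μ j ((κ : ℕ) + 1)
        = z μ j κ + Δt • a (z μ j κ) (μ κ) + β j κ (z μ j κ))
    -- a fixed control and the adjoint states of the particles
    (μ : Fin K → EuclideanSpace ℝ (Fin L))
    (r : Fin N → ℕ → EuclideanSpace ℝ (Fin 2))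
    (hrK : ∀ j, r j K = 0)
    (hrrec : ∀ j, ∀ κ : Fin K,
      r j κ = r j ((κ : ℕ) + 1)
        + Δt • (fderiv ℝ (fun w => a w (μ κ)) (z μ j κ)).adjoint (r j ((κ : ℕ) + 1))
        + (fderiv ℝ (β j κ) (z μ j κ)).adjoint (r j ((κ : ℕ) + 1))
        - Δt • gradient (fun w => g w (μ κ)) (z μ j κ))
    -- the discrete reduced objective
    (Jhat : (Fin K → EuclideanSpace ℝ (Fin L)) → ℝ)
    (hJhat : Jhat = fun μ' => Δt / N * ∑ j : Fin N, ∑ κ : Fin K, g (z μ' j κ) (μ' κ)) :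
    ∀ κ : Fin K,
      gradient (fun m => Jhat (Function.update μ κ m)) (μ κ)
        = (Δt / N) • ∑ j : Fin N,
            ((α * ⟪φ (z μ j κ), μ κ⟫) • φ (z μ j κ)
              - (r j ((κ : ℕ) + 1) 1) • φ (z μ j κ)) := by
  intro κ₀
  classical
  have hKpos : (κ₀ : ℕ) < K := κ₀.isLt
  have hK1 : (κ₀ : ℕ) + 1 ≤ K := hKpos
  -- extend the control to ℕ
  set μe : ℕ → EuclideanSpace ℝ (Fin L) := fun n => if h : n < K then μ ⟨n, h⟩ else 0 with hμedef
  have hμe : ∀ (n : ℕ) (h : n < K), μe n = μ ⟨n, h⟩ := fun n h => dif_pos h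
  have hμe2 : ∀ κ' : Fin K, μe (κ' : ℕ) = μ κ' := by
    intro κ'
    exact hμe (κ' : ℕ) κ'.isLt
  -- smoothness of the drift and cost in the state variable
  have hacd : ∀ m, ContDiff ℝ 1 (fun w => a w m) := by
    intro m; rw [ha]
    exact prg_pair_contDiff (f := fun w : EuclideanSpace ℝ (Fin 2) => w 1)
      (g := fun w : EuclideanSpace ℝ (Fin 2) => ⟪m, φ w⟫ - η * w 0)
      (by exact (EuclideanSpace.proj (1 : Fin 2) : EuclideanSpace ℝ (Fin 2) →L[ℝ] ℝ).contDiff)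
      ((ContDiff.inner (𝕜 := ℝ) contDiff_const hφ).sub
        (contDiff_const.mul (by exact (EuclideanSpace.proj (0 : Fin 2) : EuclideanSpace ℝ (Fin 2) →L[ℝ] ℝ).contDiff)))
  have hgcd : ∀ m, ContDiff ℝ 1 (fun w => g w m) := by
    intro m; rw [hg]
    exact h𝒥.add (contDiff_const.mul ((ContDiff.inner (𝕜 := ℝ) contDiff_const hφ).pow 2))
  -- locality of the states in the control
  have hloc : ∀ (μ₁ μ₂ : Fin K → EuclideanSpace ℝ (Fin L)) (j : Fin N) (n : ℕ), n ≤ K →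
      (∀ κ' : Fin K, (κ' : ℕ) < n → μ₁ κ' = μ₂ κ') → z μ₁ j n = z μ₂ j n := by
    intro μ₁ μ₂ j n
    induction n with
    | zero => intro _ _; rw [hz0, hz0]
    | succ n ih =>
      intro hn hag
      have hnK : n < K := hn
      have h1 : z μ₁ j (n + 1) = z μ₁ j n + Δt • a (z μ₁ j n) (μ₁ ⟨n, hnK⟩)
          + β j n (z μ₁ j n) := hzrec μ₁ j ⟨n, hnK⟩
      have h2 : z μ₂ j (n + 1) = z μ₂ j n + Δt • a (z μ₂ j n) (μ₂ ⟨n, hnK⟩)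
          + β j n (z μ₂ j n) := hzrec μ₂ j ⟨n, hnK⟩
      rw [h1, h2, ih (le_of_lt hnK) (fun κ' hκ' => hag κ' (lt_trans hκ' (Nat.lt_succ_self n))),
        hag ⟨n, hnK⟩ (Nat.lt_succ_self n)]
  have hupd : ∀ (j : Fin N) (m) (n : ℕ), n ≤ (κ₀ : ℕ) →
      z (Function.update μ κ₀ m) j n = z μ j n := by
    intro j m n hn
    refine hloc _ _ j n (le_trans hn (le_of_lt hKpos)) ?_
    intro κ' hκ'
    exact Function.update_of_ne (Fin.ne_of_val_ne (show ((κ' : Fin K) : ℕ) ≠ (κ₀ : ℕ) by omega)) m μ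
  have hself : Function.update μ κ₀ (μ κ₀) = μ := Function.update_eq_self κ₀ μ
  -- construction of the derivative maps of the states w.r.t. the control entry κ₀
  have hDex : ∀ j : Fin N, ∃ D : ℕ →
      (EuclideanSpace ℝ (Fin L) →L[ℝ] EuclideanSpace ℝ (Fin 2)),
      D ((κ₀ : ℕ) + 1) = Δt • ((innerSL ℝ (φ (z μ j (κ₀ : ℕ)))).smulRight pe1)
      ∧ (∀ n, (κ₀ : ℕ) + 1 ≤ n → n < K →
          D (n + 1) = (ContinuousLinearMap.id ℝ _
            + Δt • fderiv ℝ (fun w => a w (μe n)) (z μ j n)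
            + fderiv ℝ (β j n) (z μ j n)).comp (D n)) := by
    intro j
    refine ⟨fun n => Nat.rec (Δt • ((innerSL ℝ (φ (z μ j (κ₀ : ℕ)))).smulRight pe1))
      (fun i Di => (ContinuousLinearMap.id ℝ _
        + Δt • fderiv ℝ (fun w => a w (μe ((κ₀ : ℕ) + 1 + i))) (z μ j ((κ₀ : ℕ) + 1 + i))
        + fderiv ℝ (β j ((κ₀ : ℕ) + 1 + i)) (z μ j ((κ₀ : ℕ) + 1 + i))).comp Di)
      (n - ((κ₀ : ℕ) + 1)), ?_, ?_⟩
    · simp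
    · intro n hn hnK
      obtain ⟨i, rfl⟩ : ∃ i, n = (κ₀ : ℕ) + 1 + i := ⟨n - ((κ₀ : ℕ) + 1), by omega⟩
      simp only [show (κ₀ : ℕ) + 1 + i + 1 - ((κ₀ : ℕ) + 1) = i + 1 from by omega,
        show (κ₀ : ℕ) + 1 + i - ((κ₀ : ℕ) + 1) = i from by omega]
  choose D hD1 hD2 using hDex
  -- the states are differentiable in the control entry, with derivative D
  have hzd : ∀ (j : Fin N) (n : ℕ), (κ₀ : ℕ) + 1 ≤ n → n ≤ K →
      HasFDerivAt (fun m => z (Function.update μ κ₀ m) j n) (D j n) (μ κ₀) := by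
    intro j n hn
    induction n, hn using Nat.le_induction with
    | base =>
      intro _
      have hfun : (fun m => z (Function.update μ κ₀ m) j ((κ₀ : ℕ) + 1))
          = fun m => z μ j (κ₀ : ℕ) + Δt • a (z μ j (κ₀ : ℕ)) m
            + β j (κ₀ : ℕ) (z μ j (κ₀ : ℕ)) := by
        funext m
        have h1 : z (Function.update μ κ₀ m) j ((κ₀ : ℕ) + 1)
            = z (Function.update μ κ₀ m) j (κ₀ : ℕ)
              + Δt • a (z (Function.update μ κ₀ m) j (κ₀ : ℕ)) (Function.update μ κ₀ m κ₀)
              + β j (κ₀ : ℕ) (z (Function.update μ κ₀ m) j (κ₀ : ℕ)) :=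
          hzrec (Function.update μ κ₀ m) j κ₀
        rw [h1, hupd j m (κ₀ : ℕ) le_rfl, Function.update_self]
      rw [hD1 j, hfun, ha]
      exact (((prg_actrl (φ (z μ j (κ₀ : ℕ))) ((z μ j (κ₀ : ℕ)) 1)
        (η * (z μ j (κ₀ : ℕ)) 0) (μ κ₀)).const_smul Δt).const_add _).add_const _
    | succ n hn ih =>
      intro hK2
      have hnK : n < K := hK2
      have hne : (⟨n, hnK⟩ : Fin K) ≠ κ₀ := Fin.ne_of_val_ne (show n ≠ (κ₀ : ℕ) by omega)
      have hfun : (fun m => z (Function.update μ κ₀ m) j (n + 1))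
          = fun m => z (Function.update μ κ₀ m) j n
            + Δt • a (z (Function.update μ κ₀ m) j n) (μe n)
            + β j n (z (Function.update μ κ₀ m) j n) := by
        funext m
        have h1 : z (Function.update μ κ₀ m) j (n + 1)
            = z (Function.update μ κ₀ m) j n
              + Δt • a (z (Function.update μ κ₀ m) j n) (Function.update μ κ₀ m ⟨n, hnK⟩)
              + β j n (z (Function.update μ κ₀ m) j n) :=
          hzrec (Function.update μ κ₀ m) j ⟨n, hnK⟩
        rw [h1, Function.update_of_ne hne m μ, ← hμe n hnK]
      have hz' := ih (le_of_lt hnK)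
      have hpt : (fun m => z (Function.update μ κ₀ m) j n) (μ κ₀) = z μ j n := by
        show z (Function.update μ κ₀ (μ κ₀)) j n = z μ j n
        rw [hself]
      have haw : HasFDerivAt (fun w => a w (μe n))
          (fderiv ℝ (fun w => a w (μe n)) (z μ j n))
          ((fun m => z (Function.update μ κ₀ m) j n) (μ κ₀)) := by
        rw [hpt]
        exact (((hacd (μe n)).differentiable one_ne_zero) (z μ j n)).hasFDerivAt
      have hbw : HasFDerivAt (β j n) (fderiv ℝ (β j n) (z μ j n))
          ((fun m => z (Function.update μ κ₀ m) j n) (μ κ₀)) := by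
        rw [hpt]
        exact (((hβ j n).differentiable one_ne_zero) (z μ j n)).hasFDerivAt
      have htot := (hz'.add ((haw.comp (μ κ₀) hz').const_smul Δt)).add (hbw.comp (μ κ₀) hz')
      have hDeq : D j (n + 1) = D j n
          + Δt • ((fderiv ℝ (fun w => a w (μe n)) (z μ j n)).comp (D j n))
          + (fderiv ℝ (β j n) (z μ j n)).comp (D j n) := by
        rw [hD2 j n hn hnK]
        ext v
        simp [ContinuousLinearMap.comp_apply, ContinuousLinearMap.add_apply,
          ContinuousLinearMap.smul_apply, ContinuousLinearMap.id_apply]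
      rw [hfun, hDeq]
      exact htot
  -- the discrete adjoint identity
  have hQ : ∀ (j : Fin N) (hv : EuclideanSpace ℝ (Fin L)) (d n : ℕ),
      (κ₀ : ℕ) + 1 ≤ n → n ≤ K → K - n ≤ d →
      Δt * ∑ κ' ∈ Finset.Ico n K,
          ⟪gradient (fun w => g w (μe κ')) (z μ j κ'), D j κ' hv⟫
        = -⟪r j n, D j n hv⟫ := by
    intro j hv d
    induction d with
    | zero =>
      intro n hn1 hn2 hd
      have : n = K := by omega
      subst this
      simp [hrK j]
    | succ d ih =>
      intro n hn1 hn2 hd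
      rcases eq_or_lt_of_le hn2 with hEq | hlt
      · subst hEq
        simp [hrK j]
      · have hnK : n < K := hlt
        rw [Finset.sum_eq_sum_Ico_succ_bot hnK, mul_add,
          ih (n + 1) (by omega) hnK (by omega)]
        have hrw : r j n = r j (n + 1)
            + Δt • (fderiv ℝ (fun w => a w (μe n)) (z μ j n)).adjoint (r j (n + 1))
            + (fderiv ℝ (β j n) (z μ j n)).adjoint (r j (n + 1))
            - Δt • gradient (fun w => g w (μe n)) (z μ j n) := by
          rw [hμe n hnK]
          exact hrrec j ⟨n, hnK⟩
        rw [hrw, hD2 j n hn1 hnK]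
        simp only [ContinuousLinearMap.comp_apply, ContinuousLinearMap.add_apply,
          ContinuousLinearMap.smul_apply, ContinuousLinearMap.id_apply,
          inner_add_left, inner_sub_left, inner_add_right, real_inner_smul_left,
          real_inner_smul_right, ContinuousLinearMap.adjoint_inner_left]
        ring
  -- per-particle derivative of the summed cost
  have hj : ∀ j : Fin N, HasFDerivAt
      (fun m => ∑ κ' : Fin K,
        g (z (Function.update μ κ₀ m) j (κ' : ℕ)) (Function.update μ κ₀ m κ'))
      ((α * ⟪μ κ₀, φ (z μ j (κ₀ : ℕ))⟫ - r j ((κ₀ : ℕ) + 1) 1)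
        • innerSL ℝ (φ (z μ j (κ₀ : ℕ)))) (μ κ₀) := by
    intro j
    have hterm : ∀ κ' : Fin K, HasFDerivAt
        (fun m => g (z (Function.update μ κ₀ m) j (κ' : ℕ)) (Function.update μ κ₀ m κ'))
        (if (κ' : ℕ) < (κ₀ : ℕ) then 0
         else if (κ' : ℕ) = (κ₀ : ℕ) then
           (α * ⟪μ κ₀, φ (z μ j (κ₀ : ℕ))⟫) • innerSL ℝ (φ (z μ j (κ₀ : ℕ)))
         else ((InnerProductSpace.toDual ℝ _)
             (gradient (fun w => g w (μe (κ' : ℕ))) (z μ j (κ' : ℕ)))).comp (D j (κ' : ℕ)))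
        (μ κ₀) := by
      intro κ'
      rcases lt_trichotomy ((κ' : ℕ)) ((κ₀ : ℕ)) with hlt | heq | hgt
      · rw [if_pos hlt]
        have hfun : (fun m => g (z (Function.update μ κ₀ m) j (κ' : ℕ))
            (Function.update μ κ₀ m κ')) = fun _ => g (z μ j (κ' : ℕ)) (μ κ') := by
          funext m
          rw [hupd j m (κ' : ℕ) (le_of_lt hlt),
            Function.update_of_ne (Fin.ne_of_val_ne (Nat.ne_of_lt hlt)) m μ]
        rw [hfun]
        exact hasFDerivAt_const _ _
      · rw [if_neg (by omega), if_pos heq]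
        have hκ : κ' = κ₀ := Fin.ext heq
        have hfun : (fun m => g (z (Function.update μ κ₀ m) j (κ' : ℕ))
            (Function.update μ κ₀ m κ'))
            = fun m => 𝒥 (z μ j (κ₀ : ℕ))
              + α / 2 * (⟪m, φ (z μ j (κ₀ : ℕ))⟫ * ⟪m, φ (z μ j (κ₀ : ℕ))⟫) := by
          rw [hκ]
          funext m
          rw [hupd j m (κ₀ : ℕ) le_rfl, Function.update_self, hg]
          ring
        rw [hfun]
        have hin : HasFDerivAt
            (fun m : EuclideanSpace ℝ (Fin L) => ⟪m, φ (z μ j (κ₀ : ℕ))⟫)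
            (innerSL ℝ (φ (z μ j (κ₀ : ℕ)))) (μ κ₀) := by
          have heq2 : (fun m : EuclideanSpace ℝ (Fin L) => ⟪m, φ (z μ j (κ₀ : ℕ))⟫)
              = fun m => (innerSL ℝ (φ (z μ j (κ₀ : ℕ)))) m := by
            funext m
            exact real_inner_comm _ _
          rw [heq2]
          exact (innerSL ℝ _).hasFDerivAt
        have h2 := ((hin.mul hin).const_mul (α / 2)).const_add (𝒥 (z μ j (κ₀ : ℕ)))
        refine HasFDerivAt.congr_fderiv h2 ?_
        ext hv
        simp only [ContinuousLinearMap.smul_apply, ContinuousLinearMap.add_apply,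
          innerSL_apply_apply, smul_eq_mul, real_inner_comm]
        ring
      · rw [if_neg (by omega), if_neg (by omega)]
        have hne : κ' ≠ κ₀ := Fin.ne_of_val_ne (Nat.ne_of_gt hgt)
        have hfun : (fun m => g (z (Function.update μ κ₀ m) j (κ' : ℕ))
            (Function.update μ κ₀ m κ'))
            = fun m => (fun w => g w (μe (κ' : ℕ))) (z (Function.update μ κ₀ m) j (κ' : ℕ)) := by
          funext m
          rw [Function.update_of_ne hne m μ, ← hμe2 κ']
        rw [hfun]
        have hz' := hzd j (κ' : ℕ) (by omega) (le_of_lt κ'.isLt)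
        have hpt : (fun m => z (Function.update μ κ₀ m) j (κ' : ℕ)) (μ κ₀)
            = z μ j (κ' : ℕ) := by
          show z (Function.update μ κ₀ (μ κ₀)) j (κ' : ℕ) = z μ j (κ' : ℕ)
          rw [hself]
        have hgf : HasFDerivAt (fun w => g w (μe (κ' : ℕ)))
            ((InnerProductSpace.toDual ℝ _)
              (gradient (fun w => g w (μe (κ' : ℕ))) (z μ j (κ' : ℕ))))
            ((fun m => z (Function.update μ κ₀ m) j (κ' : ℕ)) (μ κ₀)) := by
          rw [hpt]
          exact ((((hgcd (μe (κ' : ℕ))).differentiable one_ne_zero)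
            (z μ j (κ' : ℕ))).hasGradientAt).hasFDerivAt
        exact hgf.comp (μ κ₀) hz'
    have hsum := HasFDerivAt.fun_sum (fun κ' (_ : κ' ∈ Finset.univ) => hterm κ')
    have hTeq : (∑ κ' : Fin K, (if (κ' : ℕ) < (κ₀ : ℕ) then 0
         else if (κ' : ℕ) = (κ₀ : ℕ) then
           (α * ⟪μ κ₀, φ (z μ j (κ₀ : ℕ))⟫) • innerSL ℝ (φ (z μ j (κ₀ : ℕ)))
         else ((InnerProductSpace.toDual ℝ _)
             (gradient (fun w => g w (μe (κ' : ℕ))) (z μ j (κ' : ℕ)))).comp (D j (κ' : ℕ))))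
        = (α * ⟪μ κ₀, φ (z μ j (κ₀ : ℕ))⟫ - r j ((κ₀ : ℕ) + 1) 1)
            • innerSL ℝ (φ (z μ j (κ₀ : ℕ))) := by
      ext hv
      simp only [ContinuousLinearMap.sum_apply]
      rw [Fin.sum_univ_eq_sum_range (fun n =>
        ((if n < (κ₀ : ℕ) then 0
          else if n = (κ₀ : ℕ) then
            (α * ⟪μ κ₀, φ (z μ j (κ₀ : ℕ))⟫) • innerSL ℝ (φ (z μ j (κ₀ : ℕ)))
          else ((InnerProductSpace.toDual ℝ _)
              (gradient (fun w => g w (μe n)) (z μ j n))).comp (D j n)) : _ →L[ℝ] ℝ) hv) K]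
      rw [Finset.range_eq_Ico, ← Finset.sum_Ico_consecutive _ (Nat.zero_le ((κ₀ : ℕ) + 1)) hK1,
        ← Finset.range_eq_Ico, Finset.sum_range_succ]
      have hz1 : (∑ n ∈ Finset.range (κ₀ : ℕ),
          ((if n < (κ₀ : ℕ) then 0
            else if n = (κ₀ : ℕ) then
              (α * ⟪μ κ₀, φ (z μ j (κ₀ : ℕ))⟫) • innerSL ℝ (φ (z μ j (κ₀ : ℕ)))
            else ((InnerProductSpace.toDual ℝ _)
                (gradient (fun w => g w (μe n)) (z μ j n))).comp (D j n)) : _ →L[ℝ] ℝ) hv)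
          = 0 := by
        refine Finset.sum_eq_zero fun n hn => ?_
        rw [if_pos (Finset.mem_range.mp hn)]
        rfl
      rw [hz1, if_neg (lt_irrefl _), if_pos rfl]
      have hlast : (∑ n ∈ Finset.Ico ((κ₀ : ℕ) + 1) K,
          ((if n < (κ₀ : ℕ) then (0 : _ →L[ℝ] ℝ)
            else if n = (κ₀ : ℕ) then
              (α * ⟪μ κ₀, φ (z μ j (κ₀ : ℕ))⟫) • innerSL ℝ (φ (z μ j (κ₀ : ℕ)))
            else ((InnerProductSpace.toDual ℝ _)
                (gradient (fun w => g w (μe n)) (z μ j n))).comp (D j n))) hv)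
          = ∑ n ∈ Finset.Ico ((κ₀ : ℕ) + 1) K,
              ⟪gradient (fun w => g w (μe n)) (z μ j n), D j n hv⟫ := by
        refine Finset.sum_congr rfl fun n hn => ?_
        have hn' := Finset.mem_Ico.mp hn
        rw [if_neg (by omega), if_neg (by omega)]
        simp [InnerProductSpace.toDual_apply_apply]
      rw [hlast]
      have hQ1 := hQ j hv (K - ((κ₀ : ℕ) + 1)) ((κ₀ : ℕ) + 1) le_rfl hK1 le_rfl
      rw [hD1 j] at hQ1
      have hBval : ⟪r j ((κ₀ : ℕ) + 1),
          (Δt • ((innerSL ℝ (φ (z μ j (κ₀ : ℕ)))).smulRight pe1)) hv⟫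
          = Δt * (⟪φ (z μ j (κ₀ : ℕ)), hv⟫ * r j ((κ₀ : ℕ) + 1) 1) := by
        simp only [ContinuousLinearMap.smul_apply, ContinuousLinearMap.smulRight_apply,
          innerSL_apply_apply, real_inner_smul_right, prg_inner_pe1']
      rw [hBval] at hQ1
      have hsum2 : (∑ n ∈ Finset.Ico ((κ₀ : ℕ) + 1) K,
          ⟪gradient (fun w => g w (μe n)) (z μ j n), D j n hv⟫)
          = -(⟪φ (z μ j (κ₀ : ℕ)), hv⟫ * r j ((κ₀ : ℕ) + 1) 1) := by
        have := mul_left_cancel₀ (ne_of_gt hΔt)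
          (hQ1.trans (by ring_nf : -(Δt * (⟪φ (z μ j (κ₀ : ℕ)), hv⟫ * r j ((κ₀ : ℕ) + 1) 1))
            = Δt * -(⟪φ (z μ j (κ₀ : ℕ)), hv⟫ * r j ((κ₀ : ℕ) + 1) 1)))
        exact this
      rw [hsum2]
      simp only [ContinuousLinearMap.smul_apply, innerSL_apply_apply, smul_eq_mul, zero_add]
      ring
    rw [← hTeq]
    exact hsum
  -- assemble
  rw [hJhat]
  have hF := (HasFDerivAt.fun_sum (fun j (_ : j ∈ Finset.univ) => hj j)).const_mul (Δt / (N : ℝ))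
  have hYeq : (Δt / (N : ℝ)) • (∑ j : Fin N,
        ((α * ⟪μ κ₀, φ (z μ j (κ₀ : ℕ))⟫ - r j ((κ₀ : ℕ) + 1) 1)
          • innerSL ℝ (φ (z μ j (κ₀ : ℕ)))))
      = (InnerProductSpace.toDual ℝ _) ((Δt / N) • ∑ j : Fin N,
          ((α * ⟪φ (z μ j (κ₀ : ℕ)), μ κ₀⟫) • φ (z μ j (κ₀ : ℕ))
            - (r j ((κ₀ : ℕ) + 1) 1) • φ (z μ j (κ₀ : ℕ)))) := by
    ext hv
    simp only [ContinuousLinearMap.smul_apply, ContinuousLinearMap.sum_apply,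
      innerSL_apply_apply, smul_eq_mul, InnerProductSpace.toDual_apply_apply,
      real_inner_smul_left, sum_inner, inner_sub_left]
    rw [Finset.mul_sum, Finset.mul_sum]
    refine Finset.sum_congr rfl fun j _ => ?_
    rw [real_inner_comm (φ (z μ j (κ₀ : ℕ))) (μ κ₀)]
    ring
  rw [hYeq] at hF
  exact (hasGradientAt_iff_hasFDerivAt.mpr hF).gradient
end
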